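/- Let M be a left divisibility monoid, a ∈ M with right normal form h_m ⋯ h_1, and z a hypercube. Define z_0 = z, h''_i = h(h_i z_{i-1}) and z_i by h_i z_{i-1} = z_i h''_i for i = 1, …, m. Then the right normal form of az is z_m · h''_m ⋯ h''_1 (dropping z_m if trivial), and in particular z_m is a hypercube. -/

import Mathlib

section Defs
variable {M : Type*} [Monoid M]

/-- `a` left-divides `b` (`b` is a right multiple of `a`). -/
def LDvd (a b : M) : Prop := ∃ d, b = a * d

/-- `a` right-divides `b` (`b` is a left multiple of `a`). -/
def RDvd (a b : M) : Prop := ∃ d, b = d * a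

/-- `a` is an irreducible element of the monoid. -/
def IsIrred (a : M) : Prop := a ≠ 1 ∧ ∀ b c, a = b * c → b = 1 ∨ c = 1

/-- `c` is a right lcm of `a` and `b`. -/
def IsRightLcm (a b c : M) : Prop :=
  LDvd a c ∧ LDvd b c ∧ ∀ m, LDvd a m → LDvd b m → LDvd c m

/-- `c` is a right lcm of the set `s`. -/
def IsRightLcmSet (s : Set M) (c : M) : Prop :=
  (∀ x ∈ s, LDvd x c) ∧ ∀ m, (∀ x ∈ s, LDvd x m) → LDvd c m

/-- A hypercube: a right lcm of a finite set of irreducible elements. -/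
def IsHypercube (h : M) : Prop :=
  ∃ s : Finset M, (∀ x ∈ s, IsIrred x) ∧ IsRightLcmSet (↑s) h

/-- `h` is the maximal hypercube right-dividing `a`. -/
def IsMaxHC (a h : M) : Prop :=
  IsHypercube h ∧ RDvd h a ∧ ∀ k, IsHypercube k → RDvd k a → RDvd k h

/-- The list `L = [h_p, …, h_1]` of nontrivial hypercubes is a right normal form:
`h_i` is the maximal hypercube right-dividing `h_p ⋯ h_i`. -/
def IsRNF (hmap : M → M) (L : List M) : Prop :=
  (∀ x ∈ L, IsHypercube x ∧ x ≠ 1) ∧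
  ∀ n (hn : n < L.length), hmap ((L.take (n + 1)).prod) = L.get ⟨n, hn⟩

end Defs

/-- A left divisibility monoid: cancellative, generated by its finitely many
irreducibles, any two elements have a left gcd, and every set of left divisors
is a finite distributive lattice under left divisibility. -/
def IsLDM (M : Type*) [Monoid M] : Prop :=
  (∀ a b c : M, a * b = a * c → b = c) ∧
  (∀ a b c : M, b * a = c * a → b = c) ∧
  (∃ S : Finset M, (∀ x ∈ S, IsIrred x) ∧ Submonoid.closure (S : Set M) = ⊤) ∧
  (∀ a b : M, ∃ g, LDvd g a ∧ LDvd g b ∧ ∀ c, LDvd c a → LDvd c b → LDvd c g) ∧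
  (∀ a : M, {b : M | LDvd b a}.Finite) ∧
  (∀ a : M, ∃ i : DistribLattice {b : M // LDvd b a},
      ∀ x y : {b : M // LDvd b a}, i.le x y ↔ LDvd x.1 y.1)

section Aux
variable {M : Type*} [Monoid M]

lemma ldvd_refl (a : M) : LDvd a a := ⟨1, (mul_one a).symm⟩
lemma one_ldvd (a : M) : LDvd 1 a := ⟨a, (one_mul a).symm⟩
lemma rdvd_refl (a : M) : RDvd a a := ⟨1, (one_mul a).symm⟩
lemma ldvd_trans {a b c : M} (h1 : LDvd a b) (h2 : LDvd b c) : LDvd a c := by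
  obtain ⟨d, rfl⟩ := h1; obtain ⟨e, rfl⟩ := h2; exact ⟨d * e, mul_assoc a d e⟩
lemma rdvd_trans {a b c : M} (h1 : RDvd a b) (h2 : RDvd b c) : RDvd a c := by
  obtain ⟨d, rfl⟩ := h1; obtain ⟨e, rfl⟩ := h2; exact ⟨e * d, (mul_assoc e d a).symm⟩

lemma ldvd_antisymm (hM : IsLDM M) {x y : M} (h1 : LDvd x y) (h2 : LDvd y x) : x = y := by
  obtain ⟨i, hi⟩ := hM.2.2.2.2.2 y
  letI := i
  have : (⟨x, h1⟩ : {b : M // LDvd b y}) = ⟨y, ldvd_refl y⟩ :=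
    le_antisymm ((hi _ _).mpr h1) ((hi _ _).mpr h2)
  exact congrArg Subtype.val this

lemma eq_one_of_mul_eq_one (hM : IsLDM M) {u v : M} (h : u * v = 1) : u = 1 ∧ v = 1 := by
  have hu : u = 1 := ldvd_antisymm hM ⟨v, h.symm⟩ (one_ldvd u)
  exact ⟨hu, by rw [hu, one_mul] at h; exact h⟩

lemma rdvd_antisymm (hM : IsLDM M) {x y : M} (h1 : RDvd x y) (h2 : RDvd y x) : x = y := by
  obtain ⟨d, hd⟩ := h1; obtain ⟨e, he⟩ := h2
  rw [hd, ← mul_assoc] at he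
  have hed : e * d = 1 := hM.2.1 x (e * d) 1 (by rw [← he, one_mul])
  have := (eq_one_of_mul_eq_one hM hed).1
  rw [hd, (eq_one_of_mul_eq_one hM hed).2, one_mul]

lemma one_hypercube : IsHypercube (1 : M) := by
  refine ⟨∅, by simp, by simp, fun m _ => one_ldvd m⟩

lemma irred_hypercube {p : M} (hp : IsIrred p) : IsHypercube p := by
  refine ⟨{p}, ?_, ?_, ?_⟩
  · intro x hx; rw [Finset.mem_singleton] at hx; rwa [hx]
  · intro x hx
    rw [Finset.coe_singleton, Set.mem_singleton_iff] at hx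
    rw [hx]; exact ldvd_refl p
  · intro m hm
    exact hm p (by simp)

lemma hmap_hypercube (hM : IsLDM M) {hmap : M → M} (hspec : ∀ a : M, IsMaxHC a (hmap a))
    {k : M} (hk : IsHypercube k) : hmap k = k :=
  rdvd_antisymm hM ((hspec k).2.1) ((hspec k).2.2 k hk (rdvd_refl k))

end Aux

section Aux2
variable {M : Type*} [Monoid M]

lemma hypercube_of_ldvd (hM : IsLDM M) {x k : M} (hk : IsHypercube k) (hx : LDvd x k) :
    IsHypercube x := by
  classical
  obtain ⟨s, hsirr, hub, hlcm⟩ := hk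
  refine ⟨s.filter (fun p => LDvd p x), ?_, ?_, ?_⟩
  · intro p hp; exact hsirr p (Finset.mem_filter.mp hp).1
  · intro p hp
    exact (Finset.mem_filter.mp (Finset.mem_coe.mp hp)).2
  · intro m hm
    obtain ⟨g, hgx, hgm, hgmax⟩ := hM.2.2.2.1 x m
    obtain ⟨i, hi⟩ := hM.2.2.2.2.2 k
    letI := i
    letI : OrderBot {b : M // LDvd b k} :=
      { bot := ⟨1, one_ldvd k⟩, bot_le := fun a => (hi _ _).mpr (one_ldvd a.1) }
    have hd : ∀ p ∈ s, LDvd p k := fun p hp => hub p (Finset.mem_coe.mpr hp)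
    set sk : Finset {b : M // LDvd b k} :=
      s.attach.image (fun p => ⟨p.1, hd p.1 p.2⟩) with hsk
    have hmemsk : ∀ p (hp : p ∈ s), (⟨p, hd p hp⟩ : {b : M // LDvd b k}) ∈ sk := by
      intro p hp
      rw [hsk, Finset.mem_image]
      exact ⟨⟨p, hp⟩, Finset.mem_attach _ _, rfl⟩
    have hskmem : ∀ b ∈ sk, b.1 ∈ s := by
      intro b hb
      rw [hsk, Finset.mem_image] at hb
      obtain ⟨p, _, rfl⟩ := hb
      exact p.2
    set x' : {b : M // LDvd b k} := ⟨x, hx⟩ with hx'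
    set k' : {b : M // LDvd b k} := ⟨k, ldvd_refl k⟩ with hk'
    set g' : {b : M // LDvd b k} := ⟨g, ldvd_trans hgx hx⟩ with hg'
    have hksup : k' = sk.sup id := by
      apply le_antisymm
      · apply (hi _ _).mpr
        apply hlcm
        intro p hp
        have hp' := Finset.mem_coe.mp hp
        exact (hi _ _).mp (Finset.le_sup (f := id) (hmemsk p hp'))
      · exact Finset.sup_le fun b _ => (hi _ _).mpr b.2
    have hxk : x' = x' ⊓ k' :=
      le_antisymm (le_inf (le_refl x') ((hi _ _).mpr hx)) inf_le_left
    have hdist : x' ⊓ sk.sup id = sk.sup fun b => x' ⊓ id b :=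
      Finset.sup_inf_distrib_left sk id x'
    have hle : x' ≤ g' := by
      rw [hxk, hksup, hdist]
      apply Finset.sup_le
      intro b hb
      have hbirr := hsirr b.1 (hskmem b hb)
      have hebx : LDvd (x' ⊓ id b).1 b.1 := (hi _ _).mp (inf_le_right (a := x') (b := id b))
      obtain ⟨c, hc⟩ := hebx
      rcases hbirr.2 _ _ hc with h1 | h1
      · apply (hi _ _).mpr
        rw [h1]
        exact one_ldvd g
      · have hbe : b.1 = (x' ⊓ id b).1 := by rw [hc, h1, mul_one]
        have hbx : LDvd b.1 x := by
          rw [hbe]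
          exact (hi _ _).mp (inf_le_left (a := x') (b := id b))
        have hbm : LDvd b.1 m := by
          apply hm
          rw [Finset.mem_coe, Finset.mem_filter]
          exact ⟨hskmem b hb, hbx⟩
        apply (hi _ _).mpr
        rw [← hbe]
        exact hgmax _ hbx hbm
    exact ldvd_trans ((hi _ _).mp hle) hgm

end Aux2

section Aux3
variable {M : Type*} [Monoid M]

lemma exists_irred_rdvd (hM : IsLDM M) {x : M} (hx : x ≠ 1) :
    ∃ p, IsIrred p ∧ RDvd p x := by
  obtain ⟨S, hSirr, hStop⟩ := hM.2.2.1
  have hmem : x ∈ Submonoid.closure (S : Set M) := by rw [hStop]; trivial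
  have key : ∀ y : M, y ∈ Submonoid.closure (S : Set M) →
      y = 1 ∨ ∃ p, IsIrred p ∧ RDvd p y := by
    intro y hy
    induction hy using Submonoid.closure_induction with
    | mem w hw => exact Or.inr ⟨w, hSirr w hw, rdvd_refl w⟩
    | one => exact Or.inl rfl
    | mul u v hu hv ihu ihv =>
      rcases ihv with h1 | ⟨p, hp, d, hd⟩
      · rw [h1, mul_one]; exact ihu
      · exact Or.inr ⟨p, hp, u * d, by rw [hd, mul_assoc]⟩
  rcases key x hmem with h | h
  · exact absurd h hx
  · exact h

lemma hmap_ne_one (hM : IsLDM M) {hmap : M → M} (hspec : ∀ a : M, IsMaxHC a (hmap a))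
    {x : M} (hx : x ≠ 1) : hmap x ≠ 1 := by
  obtain ⟨p, hp, hpd⟩ := exists_irred_rdvd hM hx
  have hpk : RDvd p (hmap x) := (hspec x).2.2 p (irred_hypercube hp) hpd
  intro h
  obtain ⟨d, hd⟩ := hpk
  rw [h] at hd
  exact hp.1 (eq_one_of_mul_eq_one hM hd.symm).2

lemma keyA' (hM : IsLDM M) {hmap : M → M} (hspec : ∀ a : M, IsMaxHC a (hmap a))
    {p : M} (hp : IsIrred p) (c : M) : hmap (c * p) = hmap (hmap c * p) := by
  obtain ⟨c', hc'⟩ := (hspec c).2.1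
  -- direction 1 : hmap (hmap c * p) right-divides hmap (c * p)
  have hd1 : RDvd (hmap (hmap c * p)) (c * p) := by
    refine rdvd_trans (hspec (hmap c * p)).2.1 ⟨c', ?_⟩
    rw [← mul_assoc, ← hc']
  have dir1 : RDvd (hmap (hmap c * p)) (hmap (c * p)) :=
    (hspec (c * p)).2.2 _ (hspec (hmap c * p)).1 hd1
  -- direction 2
  have hpk : RDvd p (hmap (c * p)) :=
    (hspec (c * p)).2.2 p (irred_hypercube hp) ⟨c, rfl⟩
  obtain ⟨k₁, hk₁⟩ := hpk
  obtain ⟨d, hd⟩ := (hspec (c * p)).2.1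
  rw [hk₁, ← mul_assoc] at hd
  have hcd : c = d * k₁ := hM.2.1 p c (d * k₁) hd
  have hk₁hyp : IsHypercube k₁ :=
    hypercube_of_ldvd hM (hspec (c * p)).1 ⟨p, hk₁⟩
  obtain ⟨e, he⟩ := (hspec c).2.2 k₁ hk₁hyp ⟨d, hcd⟩
  have dir2 : RDvd (hmap (c * p)) (hmap (hmap c * p)) := by
    apply (hspec (hmap c * p)).2.2 _ (hspec (c * p)).1
    exact ⟨e, by rw [he, mul_assoc, ← hk₁]⟩
  exact rdvd_antisymm hM dir2 dir1

lemma keyA (hM : IsLDM M) {hmap : M → M} (hspec : ∀ a : M, IsMaxHC a (hmap a))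
    (b a : M) : hmap (a * b) = hmap (hmap a * b) := by
  obtain ⟨S, hSirr, hStop⟩ := hM.2.2.1
  have hmem : b ∈ Submonoid.closure (S : Set M) := by rw [hStop]; trivial
  have key : ∀ y : M, y ∈ Submonoid.closure (S : Set M) →
      ∀ a : M, hmap (a * y) = hmap (hmap a * y) := by
    intro y hy
    induction hy using Submonoid.closure_induction with
    | mem w hw => exact fun a => keyA' hM hspec (hSirr w hw) a
    | one =>
      intro a
      rw [mul_one, mul_one, hmap_hypercube hM hspec (hspec a).1]
    | mul u v hu hv ihu ihv =>
      intro a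
      rw [← mul_assoc, ihv (a * u), ihu a, ← ihv (hmap a * u), mul_assoc]
  exact key b hmem a

end Aux3

/-- Proposition 24(ii): the right normal form of `a * z` from that of `a`,
via `z_0 = z`, `h''_i = h(h_i z_{i-1})` and `h_i z_{i-1} = z_i h''_i`. -/
theorem stmt_12 {M : Type*} [Monoid M] [DecidableEq M] (hM : IsLDM M)
    (hmap : M → M) (hspec : ∀ a : M, IsMaxHC a (hmap a))
    (L : List M) (hrnf : IsRNF hmap L) (a : M) (ha : a = L.prod)
    (z : M) (hz : IsHypercube z) :
    ∀ Z H'' : ℕ → M, Z 0 = z →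
      (∀ i (h1 : 1 ≤ i) (h2 : i ≤ L.length),
        H'' i = hmap (L.get ⟨L.length - i, by omega⟩ * Z (i - 1)) ∧
        L.get ⟨L.length - i, by omega⟩ * Z (i - 1) = Z i * H'' i) →
      IsHypercube (Z L.length) ∧
      IsRNF hmap
        ((Z L.length :: List.ofFn fun j : Fin L.length => H'' (L.length - (j : ℕ))).filter
          (fun x => decide (x ≠ 1))) ∧
      (((Z L.length :: List.ofFn fun j : Fin L.length => H'' (L.length - (j : ℕ))).filter
          (fun x => decide (x ≠ 1))).prod = a * z) := by
  intro Z H'' hZ0 hrec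
  set T := List.ofFn fun j : Fin L.length => H'' (L.length - (j : ℕ)) with hT
  have hTlen : T.length = L.length := by rw [hT]; exact List.length_ofFn
  have hTget : ∀ (n : ℕ) (hn : n < T.length),
      T.get ⟨n, hn⟩ = H'' (L.length - n) := by
    intro n hn
    exact List.get_ofFn (fun j : Fin L.length => H'' (L.length - (j : ℕ))) ⟨n, hn⟩
  -- Step A : all Z i are hypercubes
  have hZhyp : ∀ i, i ≤ L.length → IsHypercube (Z i) := by
    intro i
    induction i with
    | zero => intro _; rw [hZ0]; exact hz
    | succ n ih =>
      intro hn
      have hZn : IsHypercube (Z n) := ih (by omega)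
      obtain ⟨hH, hrec'⟩ := hrec (n + 1) (by omega) hn
      simp only [Nat.add_sub_cancel] at hH hrec'
      have hget : L.get ⟨L.length - (n+1), by omega⟩ ∈ L := List.get_mem _ _
      have hgethyp : IsHypercube (L.get ⟨L.length - (n+1), by omega⟩) :=
        (hrnf.1 _ hget).1
      have hu : RDvd (Z n) (H'' (n + 1)) := by
        rw [hH]
        exact (hspec _).2.2 (Z n) hZn ⟨_, rfl⟩
      obtain ⟨u, hu'⟩ := hu
      have heq : L.get ⟨L.length - (n+1), by omega⟩ * Z n = (Z (n+1) * u) * Z n := by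
        have := hrec'
        rw [hu'] at this
        rw [this, mul_assoc]
      have : L.get ⟨L.length - (n+1), by omega⟩ = Z (n+1) * u :=
        hM.2.1 (Z n) _ _ heq
      exact hypercube_of_ldvd hM hgethyp ⟨u, this⟩
  -- Step B : H'' i nontrivial
  have hHne : ∀ i, 1 ≤ i → i ≤ L.length → H'' i ≠ 1 := by
    intro i h1 h2
    obtain ⟨hH, _⟩ := hrec i h1 h2
    rw [hH]
    apply hmap_ne_one hM hspec
    intro heq
    have hone := (eq_one_of_mul_eq_one hM heq).1
    exact (hrnf.1 _ (List.get_mem _ _)).2 hone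
  -- Step C : telescoping product
  have hpre : ∀ j, j ≤ L.length →
      (L.take j).prod * Z (L.length - j) = Z L.length * (T.take j).prod := by
    intro j
    induction j with
    | zero => intro _; simp
    | succ n ih =>
      intro hn
      have hnm : n < L.length := by omega
      have hnm' : n < T.length := by omega
      rw [List.prod_take_succ L n hnm, List.prod_take_succ T n hnm']
      have hTn : T[n] = H'' (L.length - n) :=
        ((List.get_eq_getElem : T.get ⟨n, hnm'⟩ = T[n]).symm).trans (hTget n hnm')
      obtain ⟨_, hrec'⟩ := hrec (L.length - n) (by omega) (by omega)
      have hidx : (⟨L.length - (L.length - n), by omega⟩ : Fin L.length)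
          = ⟨n, hnm⟩ := Fin.mk_eq_mk.mpr (by omega)
      rw [hidx] at hrec'
      have hzz : L.length - n - 1 = L.length - (n + 1) := by omega
      rw [hzz] at hrec'
      have hgn : L[n] = L.get ⟨n, hnm⟩ := (List.get_eq_getElem : L.get ⟨n, hnm⟩ = L[n]).symm
      calc (L.take n).prod * L[n] * Z (L.length - (n+1))
          = (L.take n).prod * (L.get ⟨n, hnm⟩ * Z (L.length - (n+1))) := by
            rw [hgn, mul_assoc]
        _ = (L.take n).prod * (Z (L.length - n) * H'' (L.length - n)) := by rw [hrec']
        _ = ((L.take n).prod * Z (L.length - n)) * H'' (L.length - n) := by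
            rw [mul_assoc]
        _ = (Z L.length * (T.take n).prod) * H'' (L.length - n) := by
            rw [ih (by omega)]
        _ = Z L.length * ((T.take n).prod * T[n]) := by rw [mul_assoc, hTn]
  -- product identity at j = L.length
  have hprod : a * z = Z L.length * T.prod := by
    have := hpre L.length le_rfl
    rw [List.take_length, Nat.sub_self, hZ0, List.take_of_length_le (le_of_eq hTlen), ← ha] at this
    exact this
  -- Step D : hmap of prefixes
  have hpm : ∀ j, 1 ≤ j → j ≤ L.length →
      hmap ((L.take j).prod * Z (L.length - j)) = H'' (L.length - j + 1) := by
    intro j h1 h2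
    rw [keyA hM hspec]
    have hj1 : j - 1 < L.length := by omega
    have hr := hrnf.2 (j - 1) hj1
    have hj11 : j - 1 + 1 = j := by omega
    rw [hj11] at hr
    rw [hr]
    obtain ⟨hH, _⟩ := hrec (L.length - j + 1) (by omega) (by omega)
    have hidx : (⟨L.length - (L.length - j + 1), by omega⟩ : Fin L.length)
        = ⟨j - 1, hj1⟩ := Fin.mk_eq_mk.mpr (by omega)
    rw [hidx] at hH
    have hzz : L.length - j + 1 - 1 = L.length - j := by omega
    rw [hzz] at hH
    exact hH.symm
  have hstep : ∀ j, 1 ≤ j → j ≤ L.length →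
      hmap (Z L.length * (T.take j).prod) = H'' (L.length - j + 1) := by
    intro j h1 h2
    rw [← hpre j h2]
    exact hpm j h1 h2
  -- all elements of T are nontrivial hmap-values
  have hTmem : ∀ x ∈ T, (∃ i, 1 ≤ i ∧ i ≤ L.length ∧ x = H'' i) := by
    intro x hx
    rw [hT, List.mem_ofFn] at hx
    obtain ⟨j, hj⟩ := hx
    exact ⟨L.length - (j : ℕ), by omega, by omega, hj.symm⟩
  have hTne : ∀ x ∈ T, x ≠ 1 := by
    intro x hx
    obtain ⟨i, h1, h2, rfl⟩ := hTmem x hx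
    exact hHne i h1 h2
  have hThyp : ∀ x ∈ T, IsHypercube x := by
    intro x hx
    obtain ⟨i, h1, h2, rfl⟩ := hTmem x hx
    rw [(hrec i h1 h2).1]
    exact (hspec _).1
  have hTfil : T.filter (fun x => decide (x ≠ 1)) = T :=
    List.filter_eq_self.mpr fun x hx => decide_eq_true (hTne x hx)
  have hZmhyp : IsHypercube (Z L.length) := hZhyp L.length le_rfl
  -- case split on triviality of Z L.length
  by_cases hcase : Z L.length = 1
  · have hfil : (Z L.length :: T).filter (fun x => decide (x ≠ 1)) = T := by
      rw [List.filter_cons_of_neg, hTfil]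
      simp [hcase]
    rw [hfil]
    refine ⟨hZmhyp, ⟨?_, ?_⟩, ?_⟩
    · intro x hx; exact ⟨hThyp x hx, hTne x hx⟩
    · intro n hn
      have hnm : n < L.length := by omega
      have hmain := hstep (n + 1) (by omega) (by omega)
      rw [hcase, one_mul] at hmain
      rw [hmain, hTget n hn]
      congr 1
      omega
    · rw [hprod, hcase, one_mul]
  · have hfil : (Z L.length :: T).filter (fun x => decide (x ≠ 1))
        = Z L.length :: T := by
      rw [List.filter_cons_of_pos, hTfil]
      simp [hcase]
    rw [hfil]
    refine ⟨hZmhyp, ⟨?_, ?_⟩, ?_⟩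
    · intro x hx
      rcases List.mem_cons.mp hx with rfl | hx'
      · exact ⟨hZmhyp, hcase⟩
      · exact ⟨hThyp x hx', hTne x hx'⟩
    · intro n hn
      match n, hn with
      | 0, hn =>
        simp only [List.take, List.prod_cons, List.prod_nil, mul_one]
        show hmap (Z L.length) = Z L.length
        exact hmap_hypercube hM hspec hZmhyp
      | (n + 1), hn =>
        have hnm : n < L.length := by
          simp only [List.length_cons, hTlen] at hn
          omega
        have htake : (Z L.length :: T).take (n + 2) = Z L.length :: T.take (n + 1) := rfl
        rw [htake, List.prod_cons]
        have hmain := hstep (n + 1) (by omega) (by omega)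
        rw [hmain]
        have hget : (Z L.length :: T).get ⟨n + 1, hn⟩ = T.get ⟨n, by omega⟩ := rfl
        rw [hget, hTget n (by omega)]
        congr 1
        omega
    · rw [List.prod_cons, hprod]
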